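/- Let n ≥ 1, let δ_1,...,δ_n be positive reals and θ_1,...,θ_n be nonzero reals. Define H_m = ∑_{k|m} δ_k² for m = 1,...,n, and let T be the n×n matrix with T_{i,j} = δ_i θ_j if i | j and 0 otherwise. Then the matrix A with entries A_{i,j} = θ_i θ_j H_{gcd(i,j)} satisfies A = Tᵗ T, and A is positive definite. -/

import Mathlib

open Matrix

theorem gcd_matrix_factorization_posdef (n : ℕ) (hn : 1 ≤ n) (δ θ : Fin n → ℝ)
    (hδ : ∀ i, 0 < δ i) (hθ : ∀ i, θ i ≠ 0)
    (H : ℕ → ℝ) (hH : ∀ m : ℕ, H m = ∑ i : Fin n, if ((i : ℕ) + 1) ∣ m then δ i ^ 2 else 0)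
    (T : Matrix (Fin n) (Fin n) ℝ)
    (hT : ∀ i j, T i j = if ((i : ℕ) + 1) ∣ ((j : ℕ) + 1) then δ i * θ j else 0)
    (A : Matrix (Fin n) (Fin n) ℝ)
    (hA : ∀ i j, A i j = θ i * θ j * H (Nat.gcd ((i : ℕ) + 1) ((j : ℕ) + 1))) :
    A = T.transpose * T ∧ A.PosDef := by
  have hAeq : A = T.transpose * T := by
    ext i j
    rw [hA, Matrix.mul_apply, hH, Finset.mul_sum]
    apply Finset.sum_congr rfl
    intro k _
    rw [Matrix.transpose_apply, hT, hT]
    by_cases h1 : ((k : ℕ) + 1) ∣ ((i : ℕ) + 1) <;>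
      by_cases h2 : ((k : ℕ) + 1) ∣ ((j : ℕ) + 1)
    · rw [if_pos h1, if_pos h2, if_pos (Nat.dvd_gcd h1 h2)]; ring
    · rw [if_pos h1, if_neg h2, if_neg (fun h => h2 (h.trans (Nat.gcd_dvd_right _ _)))]; ring
    · rw [if_neg h1, if_neg (fun h => h1 (h.trans (Nat.gcd_dvd_left _ _)))]; ring
    · rw [if_neg h1, if_neg (fun h => h1 (h.trans (Nat.gcd_dvd_left _ _)))]; ring
  have hTri : T.BlockTriangular id := by
    intro i j hij
    have hij' : (j : ℕ) < (i : ℕ) := hij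
    rw [hT, if_neg]
    intro hd
    have := Nat.le_of_dvd (Nat.succ_pos _) hd
    omega
  have hdet : T.det ≠ 0 := by
    rw [Matrix.det_of_upperTriangular hTri]
    apply Finset.prod_ne_zero_iff.mpr
    intro i _
    rw [hT, if_pos dvd_rfl]
    exact mul_ne_zero (hδ i).ne' (hθ i)
  have hinj : Function.Injective T.mulVec :=
    Matrix.mulVec_injective_iff_isUnit.mpr
      ((Matrix.isUnit_iff_isUnit_det T).mpr (isUnit_iff_ne_zero.mpr hdet))
  refine ⟨hAeq, Matrix.posDef_iff_dotProduct_mulVec.mpr ⟨?_, ?_⟩⟩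
  · rw [hAeq]
    exact (Matrix.posSemidef_conjTranspose_mul_self T).1
  · intro x hx
    rw [hAeq]
    have hTx : T.mulVec x ≠ 0 := fun h => hx (hinj (h.trans (Matrix.mulVec_zero T).symm))
    have key : dotProduct (star x) ((T.transpose * T).mulVec x)
        = dotProduct (T.mulVec x) (T.mulVec x) := by
      rw [← Matrix.mulVec_mulVec, dotProduct_mulVec, star_trivial,
        Matrix.vecMul_transpose]
    rw [key]
    obtain ⟨i, hi⟩ := Function.ne_iff.mp hTx
    exact Finset.sum_pos' (fun j _ => mul_self_nonneg _)
      ⟨i, Finset.mem_univ i, mul_self_pos.mpr (by simpa using hi)⟩
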